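/- Let G be a DAG on {1, …, p} all of whose edges (j, i) satisfy j < i, let κ^G be its induced staging and let G_{κ^G} be the DAG constructed from the staging κ^G. Then the staged tree model of κ^G coincides with the Bayesian network model of the reconstructed DAG: M_{κ^G} = M_{G_{κ^G}}. -/

import Mathlib

open scoped Classical

/-- Full configurations of the `p` variables `X 0, …, X (p-1)`. -/
abbrev Cfg {p : ℕ} (X : Fin p → Type) : Type := ∀ j : Fin p, X j

/-- Prefixes of length `i`: assignments of values to the first `i` variables. -/
abbrev Pref {p : ℕ} (X : Fin p → Type) (i : ℕ) : Type :=
  ∀ j : Fin p, (j : ℕ) < i → X j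

/-- The full configuration `y` extends the prefix `x`. -/
def Agrees {p : ℕ} {X : Fin p → Type} {i : ℕ} (y : Cfg X) (x : Pref X i) : Prop :=
  ∀ (j : Fin p) (h : (j : ℕ) < i), y j = x j h

/-- The probability (under the mass function `P`) that the first `i` variables take the
values prescribed by the prefix `x`. -/
noncomputable def prefProb {p : ℕ} {X : Fin p → Type} [∀ j, Fintype (X j)]
    (P : Cfg X → ℝ) {i : ℕ} (x : Pref X i) : ℝ :=
  ∑ y : Cfg X, if Agrees y x then P y else 0

/-- The conditional probability `P(X_{i+1} = z | (X_1, …, X_i) = x)` (with `i` zero-based: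
the variable indexed by `i : Fin p` given the values `x` of the preceding variables). -/
noncomputable def condProb {p : ℕ} {X : Fin p → Type} [∀ j, Fintype (X j)]
    (P : Cfg X → ℝ) (i : Fin p) (x : Pref X i.1) (z : X i) : ℝ :=
  (∑ y : Cfg X, if Agrees y x ∧ y i = z then P y else 0) / prefProb P x

/-- Membership in the staged tree model `M_κ` of the staging `κ`: `P` is a strictly positive
probability mass function whose conditional distributions coincide on vertices in the
same stage, at every level `i ∈ {1, …, p-1}` (zero-based: `1 ≤ i < p`). -/
def MemStagedModel {p : ℕ} {X : Fin p → Type} [∀ j, Fintype (X j)] {C : Type*}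
    (κ : (i : Fin p) → Pref X i.1 → C) (P : Cfg X → ℝ) : Prop :=
  (∀ y : Cfg X, 0 < P y) ∧ (∑ y : Cfg X, P y = 1) ∧
    ∀ i : Fin p, 1 ≤ (i : ℕ) → ∀ x x' : Pref X i.1, κ i x = κ i x' →
      ∀ z : X i, condProb P i x z = condProb P i x' z

/-- Membership in the Bayesian network model `M_G` of a DAG on `{1, …, p}` whose edges all
point from lower to higher indices; the DAG is encoded by its edge relation `E`
(`E j i` means there is an edge from `j` to `i`, i.e. `j` is a parent of `i`). -/
def MemBNModel {p : ℕ} {X : Fin p → Type} [∀ j, Fintype (X j)]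
    (E : Fin p → Fin p → Prop) (P : Cfg X → ℝ) : Prop :=
  (∀ y : Cfg X, 0 ≤ P y) ∧ (∑ y : Cfg X, P y = 1) ∧
    ∃ g : (i : Fin p) → X i → ((j : Fin p) → E j i → X j) → ℝ,
      (∀ (i : Fin p) (z : X i) (par : (j : Fin p) → E j i → X j),
        g i z par ∈ Set.Ioo (0 : ℝ) 1) ∧
      (∀ (i : Fin p) (par : (j : Fin p) → E j i → X j), ∑ z : X i, g i z par = 1) ∧
      (∀ y : Cfg X, P y = ∏ i : Fin p, g i (y i) (fun j _ => y j))

/-- The edge relation of the DAG `G_κ` associated to a staging `κ`: there is an edge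
from `k` to `i` iff `k < i` and there are two prefixes of length `i` differing only in
coordinate `k` that receive different colors. -/
def stagingEdge {p : ℕ} {X : Fin p → Type} {C : Type*}
    (κ : (i : Fin p) → Pref X i.1 → C) (k i : Fin p) : Prop :=
  (k : ℕ) < (i : ℕ) ∧ ∃ x x' : Pref X i.1,
    (∀ (j : Fin p) (h : (j : ℕ) < (i : ℕ)), j ≠ k → x j h = x' j h) ∧ κ i x ≠ κ i x'

/-- The staging `κ^G` induced by a DAG with edge relation `E` (all of whose edges point
from lower to higher indices): the color of a prefix of length `i` is its projection onto
the parent coordinates of vertex `i`. -/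
def indStaging {p : ℕ} {X : Fin p → Type} (E : Fin p → Fin p → Prop)
    (hE : ∀ k i : Fin p, E k i → (k : ℕ) < (i : ℕ)) :
    (i : Fin p) → Pref X i.1 → ((i : Fin p) × ((j : Fin p) → E j i → X j)) :=
  fun i x => ⟨i, fun j h => x j (hE j i h)⟩

section Aux

variable {p : ℕ} {X : Fin p → Type} [∀ j, Fintype (X j)]

/-- Extend a prefix of length `i` by a value for coordinate `i`. -/
def extp (i : Fin p) (x : Pref X i.1) (z : X i) : Pref X (i.1 + 1) :=
  fun j h => if h' : (j : ℕ) < i.1 then x j h'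
    else cast (congrArg X (Fin.eq_of_val_eq (by omega) : j = i)).symm z

lemma extp_lt (i : Fin p) (x : Pref X i.1) (z : X i) (j : Fin p)
    (h : (j : ℕ) < i.1 + 1) (h' : (j : ℕ) < i.1) : extp i x z j h = x j h' :=
  dif_pos h'

lemma extp_self (i : Fin p) (x : Pref X i.1) (z : X i) (h : (i : ℕ) < i.1 + 1) :
    extp i x z i h = z := by
  simp only [extp]
  rw [dif_neg (lt_irrefl _)]
  exact cast_eq_iff_heq.mpr HEq.rfl

lemma agrees_extp (i : Fin p) (x : Pref X i.1) (z : X i) (y : Cfg X) :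
    Agrees y (extp i x z) ↔ Agrees y x ∧ y i = z := by
  constructor
  · intro hA
    refine ⟨fun j h => ?_, ?_⟩
    · rw [hA j (by omega), extp_lt i x z j (by omega) h]
    · rw [hA i (by omega), extp_self]
  · rintro ⟨h1, h2⟩ j h
    by_cases h' : (j : ℕ) < i.1
    · rw [extp_lt i x z j h h']; exact h1 j h'
    · have hj : j = i := Fin.eq_of_val_eq (by omega)
      subst hj
      rw [extp_self]; exact h2

lemma numer_eq (P : Cfg X → ℝ) (i : Fin p) (x : Pref X i.1) (z : X i) :
    (∑ y : Cfg X, if Agrees y x ∧ y i = z then P y else 0) = prefProb P (extp i x z) := by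
  rw [prefProb]
  exact Finset.sum_congr rfl fun y _ => by rw [if_congr (agrees_extp i x z y).symm rfl rfl]

lemma prefProb_sum_ext (P : Cfg X → ℝ) (i : Fin p) (x : Pref X i.1) :
    prefProb P x = ∑ z : X i, prefProb P (extp i x z) := by
  have h : ∀ z : X i, prefProb P (extp i x z)
      = ∑ y : Cfg X, if Agrees y x ∧ y i = z then P y else 0 :=
    fun z => (numer_eq P i x z).symm
  rw [Finset.sum_congr rfl (fun z _ => h z), Finset.sum_comm, prefProb]
  refine Finset.sum_congr rfl fun y _ => ?_
  by_cases hA : Agrees y x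
  · simp [hA]
  · simp [hA]

lemma prefProb_pos (hne : ∀ j, Nonempty (X j)) {P : Cfg X → ℝ} (hP : ∀ y, 0 < P y)
    {i : ℕ} (x : Pref X i) : 0 < prefProb P x := by
  rw [prefProb]
  refine Finset.sum_pos' (fun y _ => ?_) ?_
  · split_ifs
    · exact (hP y).le
    · exact le_refl 0
  · refine ⟨fun j => if h : (j : ℕ) < i then x j h else (hne j).some, Finset.mem_univ _, ?_⟩
    have hA : Agrees (fun j => if h : (j : ℕ) < i then x j h else (hne j).some) x :=
      fun j h => dif_pos h
    rw [if_pos hA]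
    exact hP _

lemma condProb_eq_div (P : Cfg X → ℝ) (i : Fin p) (x : Pref X i.1) (z : X i) :
    condProb P i x z = prefProb P (extp i x z) / prefProb P x := by
  rw [condProb, numer_eq]

lemma prefProb_extp (P : Cfg X → ℝ) (i : Fin p) (x : Pref X i.1) (z : X i)
    (hx : prefProb P x ≠ 0) :
    prefProb P (extp i x z) = condProb P i x z * prefProb P x := by
  rw [condProb_eq_div, div_mul_cancel₀ _ hx]

lemma condProb_mem_Ioo (hne : ∀ j, Nonempty (X j)) (h2 : ∀ j, 2 ≤ Fintype.card (X j))
    {P : Cfg X → ℝ} (hP : ∀ y, 0 < P y) (i : Fin p) (x : Pref X i.1) (z : X i) :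
    condProb P i x z ∈ Set.Ioo (0 : ℝ) 1 := by
  have hx := prefProb_pos hne hP x
  rw [condProb_eq_div]
  constructor
  · exact div_pos (prefProb_pos hne hP _) hx
  · rw [div_lt_one hx, prefProb_sum_ext P i x]
    obtain ⟨z', hz'⟩ := Fintype.exists_ne_of_one_lt_card (by have := h2 i; omega) z
    exact Finset.single_lt_sum hz' (Finset.mem_univ _) (Finset.mem_univ _)
      (prefProb_pos hne hP _) (fun k _ _ => (prefProb_pos hne hP _).le)

lemma sum_condProb (hne : ∀ j, Nonempty (X j)) {P : Cfg X → ℝ} (hP : ∀ y, 0 < P y)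
    (i : Fin p) (x : Pref X i.1) : ∑ z : X i, condProb P i x z = 1 := by
  have hx := (prefProb_pos hne hP x).ne'
  calc ∑ z : X i, condProb P i x z
      = (∑ z : X i, prefProb P (extp i x z)) / prefProb P x := by
        rw [Finset.sum_div]
        exact Finset.sum_congr rfl fun z _ => condProb_eq_div P i x z
    _ = 1 := by rw [← prefProb_sum_ext, div_self hx]

/-- Truncation of a configuration to a prefix. -/
def trunc (y : Cfg X) (i : ℕ) : Pref X i := fun j _ => y j

lemma prefProb_trunc_zero (P : Cfg X → ℝ) (y : Cfg X) :
    prefProb P (trunc y 0) = ∑ y' : Cfg X, P y' := by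
  rw [prefProb]
  exact Finset.sum_congr rfl fun y' _ => if_pos (fun j h => absurd h (Nat.not_lt_zero _))

lemma prefProb_trunc_top (P : Cfg X → ℝ) (y : Cfg X) :
    prefProb P (trunc y p) = P y := by
  have key : ∀ y' : Cfg X, Agrees y' (trunc y p) ↔ y' = y := by
    intro y'
    constructor
    · intro h; funext j; exact h j j.2
    · rintro rfl j h; rfl
  rw [prefProb]
  rw [Finset.sum_congr rfl (fun y' _ => by rw [if_congr (key y') rfl rfl])]
  simp

lemma trunc_succ (y : Cfg X) (i : Fin p) :
    trunc y (i.1 + 1) = extp i (trunc y i.1) (y i) := by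
  funext j h
  by_cases h' : (j : ℕ) < i.1
  · rw [extp_lt i _ _ j h h']; rfl
  · have hj : j = i := Fin.eq_of_val_eq (by omega)
    subst hj
    rw [extp_self]; rfl

lemma chain_rule (hne : ∀ j, Nonempty (X j)) {P : Cfg X → ℝ} (hP : ∀ y, 0 < P y)
    (hsum : ∑ y' : Cfg X, P y' = 1) (y : Cfg X) :
    P y = ∏ i : Fin p, condProb P i (trunc y i.1) (y i) := by
  have main : ∀ n, n ≤ p → prefProb P (trunc y n) =
      ∏ i : Fin p, if (i : ℕ) < n then condProb P i (trunc y i.1) (y i) else 1 := by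
    intro n
    induction n with
    | zero =>
      intro _
      rw [prefProb_trunc_zero, hsum]
      simp
    | succ n ih =>
      intro hn
      have hn' : n ≤ p := by omega
      set i0 : Fin p := ⟨n, by omega⟩ with hi0
      have h1 : trunc y (n + 1) = extp i0 (trunc y n) (y i0) := trunc_succ y i0
      rw [h1, prefProb_extp P i0 _ _ (prefProb_pos hne hP _).ne', ih hn']
      have split : ∀ i : Fin p,
          (if (i : ℕ) < n + 1 then condProb P i (trunc y i.1) (y i) else 1)
          = (if i = i0 then condProb P i (trunc y i.1) (y i) else 1) *
            (if (i : ℕ) < n then condProb P i (trunc y i.1) (y i) else 1) := by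
        intro i
        by_cases hlt : (i : ℕ) < n
        · have hne' : i ≠ i0 := fun h => by rw [h] at hlt; exact absurd hlt (by simp [hi0])
          rw [if_pos (by omega), if_neg hne', if_pos hlt, one_mul]
        · by_cases heq : i = i0
          · subst heq
            rw [if_pos (by simp [hi0]), if_pos rfl, if_neg hlt, mul_one]
          · have hv : (i : ℕ) ≠ n := fun hh => heq (Fin.eq_of_val_eq (by simp [hi0, hh]))
            rw [if_neg (by omega), if_neg heq, if_neg hlt, one_mul]
      rw [Finset.prod_congr rfl (fun i _ => split i), Finset.prod_mul_distrib,
        Finset.prod_ite_eq' Finset.univ i0 (fun i => condProb P i (trunc y i.1) (y i))]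
      simp [mul_comm]
      left; rfl
  have hmain := main p le_rfl
  rw [prefProb_trunc_top] at hmain
  rw [hmain]
  exact Finset.prod_congr rfl fun i _ => if_pos i.2

end Aux
section Marg

variable {p : ℕ} {X : Fin p → Type} [∀ j, Fintype (X j)]
  {R : Fin p → Fin p → Prop} (hR : ∀ k i : Fin p, R k i → (k : ℕ) < (i : ℕ))
  (g : (i : Fin p) → X i → ((j : Fin p) → R j i → X j) → ℝ)

/-- Partial product of the factorization along a prefix. -/
noncomputable def pr (n : ℕ) (x : Pref X n) : ℝ :=
  ∏ j : Fin p, if h : (j : ℕ) < n then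
    g j (x j h) (fun k hk => x k (Nat.lt_trans (hR k j hk) h)) else 1

lemma factor_split (i0 : Fin p) (x : Pref X i0.1) (z : X i0) :
    pr hR g (i0.1 + 1) (extp i0 x z)
      = pr hR g i0.1 x * g i0 z (fun k hk => x k (hR k i0 hk)) := by
  unfold pr
  have key : ∀ j : Fin p,
      (if h : (j : ℕ) < i0.1 + 1 then g j (extp i0 x z j h)
          (fun k hk => extp i0 x z k (Nat.lt_trans (hR k j hk) h)) else 1)
      = (if h : (j : ℕ) < i0.1 then g j (x j h)
          (fun k hk => x k (Nat.lt_trans (hR k j hk) h)) else 1)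
        * (if j = i0 then g i0 z (fun k hk => x k (hR k i0 hk)) else 1) := by
    intro j
    by_cases h' : (j : ℕ) < i0.1
    · have hji : j ≠ i0 := fun h => by subst h; omega
      rw [dif_pos (Nat.lt_trans h' (Nat.lt_succ_self _)), dif_pos h', if_neg hji, mul_one]
      refine congrArg₂ (g j) ?_ ?_
      · exact extp_lt i0 x z j _ h'
      · funext k hk
        exact extp_lt i0 x z k _ (Nat.lt_trans (hR k j hk) h')
    · by_cases hji : j = i0
      · subst hji
        rw [dif_pos (Nat.lt_succ_self _), dif_neg h', one_mul, if_pos rfl]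
        refine congrArg₂ (g j) ?_ ?_
        · exact extp_self j x z _
        · funext k hk
          exact extp_lt j x z k _ (hR k j hk)
      · have hv : (j : ℕ) ≠ i0.1 := fun hh => hji (Fin.eq_of_val_eq hh)
        rw [dif_neg (by omega), dif_neg h', if_neg hji, mul_one]
  rw [Finset.prod_congr rfl (fun j _ => key j), Finset.prod_mul_distrib,
    Finset.prod_ite_eq' Finset.univ i0 (fun _ => g i0 z (fun k hk => x k (hR k i0 hk)))]
  simp

lemma marg (P : Cfg X → ℝ)
    (hg1 : ∀ (i : Fin p) (par : (j : Fin p) → R j i → X j), ∑ z : X i, g i z par = 1)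
    (hfac : ∀ y : Cfg X, P y = ∏ i : Fin p, g i (y i) (fun j _ => y j)) :
    ∀ (d n : ℕ), n + d = p → ∀ x : Pref X n, prefProb P x = pr hR g n x := by
  intro d
  induction d with
  | zero =>
    intro n hn x
    obtain rfl : n = p := by omega
    have key : ∀ y : Cfg X, Agrees y x ↔ y = (fun j => x j j.2) := by
      intro y
      constructor
      · intro h; funext j; exact h j j.2
      · rintro rfl j h; rfl
    rw [prefProb, Finset.sum_congr rfl (fun y _ => by rw [if_congr (key y) rfl rfl])]
    simp only [Finset.sum_ite_eq', Finset.mem_univ, if_pos]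
    rw [hfac]
    refine Finset.prod_congr rfl fun j _ => ?_
    rw [dif_pos j.2]
  | succ d ih =>
    intro n hn x
    set i0 : Fin p := ⟨n, by omega⟩ with hi0
    rw [prefProb_sum_ext P i0 x]
    have h1 : ∀ z : X i0, prefProb P (extp i0 x z)
        = pr hR g n x * g i0 z (fun k hk => x k (hR k i0 hk)) := by
      intro z
      rw [ih (n + 1) (by omega) (extp i0 x z)]
      exact factor_split hR g i0 x z
    rw [Finset.sum_congr rfl (fun z _ => h1 z), ← Finset.mul_sum, hg1, mul_one]

lemma pr_pos (hg0 : ∀ (i : Fin p) (z : X i) (par : (j : Fin p) → R j i → X j), 0 < g i z par)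
    (n : ℕ) (x : Pref X n) : 0 < pr hR g n x := by
  refine Finset.prod_pos fun j _ => ?_
  by_cases h : (j : ℕ) < n
  · rw [dif_pos h]; exact hg0 _ _ _
  · rw [dif_neg h]; norm_num

lemma condProb_eq_g (P : Cfg X → ℝ)
    (hg0 : ∀ (i : Fin p) (z : X i) (par : (j : Fin p) → R j i → X j),
      g i z par ∈ Set.Ioo (0 : ℝ) 1)
    (hg1 : ∀ (i : Fin p) (par : (j : Fin p) → R j i → X j), ∑ z : X i, g i z par = 1)
    (hfac : ∀ y : Cfg X, P y = ∏ i : Fin p, g i (y i) (fun j _ => y j))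
    (i : Fin p) (x : Pref X i.1) (z : X i) :
    condProb P i x z = g i z (fun k hk => x k (hR k i hk)) := by
  have hi := i.2
  rw [condProb_eq_div,
    marg hR g P hg1 hfac (p - (i.1 + 1)) (i.1 + 1) (by omega) (extp i x z),
    marg hR g P hg1 hfac (p - i.1) i.1 (by omega) x, factor_split]
  exact mul_div_cancel_left₀ _ (pr_pos hR g (fun i z par => (hg0 i z par).1) _ _).ne'

end Marg
section Edge

variable {p : ℕ} {X : Fin p → Type} [∀ j, Fintype (X j)]

lemma edge_iff (h2 : ∀ j, 2 ≤ Fintype.card (X j)) (E : Fin p → Fin p → Prop)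
    (hE : ∀ k i : Fin p, E k i → (k : ℕ) < (i : ℕ)) (k i : Fin p) :
    stagingEdge (indStaging (X := X) E hE) k i ↔ E k i := by
  constructor
  · rintro ⟨hki, x, x', hagree, hneq⟩
    by_contra hEk
    apply hneq
    show (⟨i, fun j h => x j (hE j i h)⟩ : (i : Fin p) × ((j : Fin p) → E j i → X j))
      = ⟨i, fun j h => x' j (hE j i h)⟩
    refine congrArg (Sigma.mk i) ?_
    funext j h
    by_cases hjk : j = k
    · subst hjk; exact absurd h hEk
    · exact hagree j (hE j i h) hjk
  · intro hEk
    have hki := hE k i hEk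
    have hne : ∀ j, Nonempty (X j) :=
      fun j => Fintype.card_pos_iff.mp (by have := h2 j; omega)
    refine ⟨hki, ?_⟩
    set x0 : Pref X i.1 := fun j _ => (hne j).some with hx0
    obtain ⟨z', hz'⟩ := Fintype.exists_ne_of_one_lt_card
      (by have := h2 k; omega) (x0 k hki)
    refine ⟨x0, fun j h => if hj : j = k then cast (congrArg X hj).symm z' else x0 j h,
      fun j h hjk => by simp only [dif_neg hjk], ?_⟩
    intro hcol
    have hcol' := eq_of_heq (Sigma.ext_iff.mp hcol).2
    have hval := congrFun (congrFun hcol' k) hEk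
    simp only [indStaging] at hval
    rw [dif_pos trivial] at hval
    have hzz : x0 k (hE k i hEk) = z' := by
      rw [hval]
      exact cast_eq_iff_heq.mpr HEq.rfl
    exact hz' hzz.symm

end Edge
/-- For a DAG `G` with induced staging `κ^G`, the staged tree model of
`κ^G` coincides with the Bayesian network model of the reconstructed DAG `G_{κ^G}`:
`M_{κ^G} = M_{G_{κ^G}}`. -/
theorem stagedModel_indStaging_eq_bnModel_reconstructed {p : ℕ} (hp : 1 ≤ p)
    (X : Fin p → Type) [∀ j, Fintype (X j)] (h2 : ∀ j, 2 ≤ Fintype.card (X j))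
    (E : Fin p → Fin p → Prop) (hE : ∀ k i : Fin p, E k i → (k : ℕ) < (i : ℕ)) :
    ∀ P : Cfg X → ℝ,
      MemStagedModel (indStaging (X := X) E hE) P ↔
        MemBNModel (stagingEdge (indStaging (X := X) E hE)) P := by

  intro P
  have hne : ∀ j, Nonempty (X j) :=
    fun j => Fintype.card_pos_iff.mp (by have := h2 j; omega)
  have hR : ∀ k i : Fin p, stagingEdge (indStaging (X := X) E hE) k i → (k : ℕ) < (i : ℕ) :=
    fun k i h => h.1
  constructor
  · rintro ⟨hpos, hsum, hstage⟩
    have inv : ∀ (i : Fin p) (x x' : Pref X i.1),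
        (∀ (k : Fin p) (hk : stagingEdge (indStaging (X := X) E hE) k i),
          x k (hR k i hk) = x' k (hR k i hk)) →
        ∀ z : X i, condProb P i x z = condProb P i x' z := by
      intro i x x' hxx z
      rcases Nat.eq_zero_or_pos i.1 with h0 | h1
      · have hxe : x = x' := by
          funext j h
          exact absurd h (by omega)
        rw [hxe]
      · refine hstage i h1 x x' ?_ z
        show (⟨i, fun j h => x j (hE j i h)⟩ : (i : Fin p) × ((j : Fin p) → E j i → X j))
          = ⟨i, fun j h => x' j (hE j i h)⟩
        refine congrArg (Sigma.mk i) ?_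
        funext j h
        exact hxx j ((edge_iff h2 E hE j i).mpr h)
    refine ⟨fun y => (hpos y).le, hsum,
      fun i z par => condProb P i
        (fun j _ => if hh : stagingEdge (indStaging (X := X) E hE) j i then par j hh
          else (hne j).some) z, ?_, ?_, ?_⟩
    · intro i z par
      exact condProb_mem_Ioo hne h2 hpos i _ z
    · intro i par
      exact sum_condProb hne hpos i _
    · intro y
      rw [chain_rule hne hpos hsum y]
      refine Finset.prod_congr rfl fun i _ => ?_
      refine inv i (trunc y i.1)
        (fun j _ => if hh : stagingEdge (indStaging (X := X) E hE) j i then y j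
          else (hne j).some) (fun k hk => ?_) (y i)
      show y k = _
      simp only [dif_pos hk]
  · rintro ⟨-, hsum, g, hg0, hg1, hfac⟩
    have hpos : ∀ y, 0 < P y := fun y => by
      rw [hfac y]
      exact Finset.prod_pos fun i _ => (hg0 i (y i) _).1
    refine ⟨hpos, hsum, ?_⟩
    intro i _ x x' hcol z
    rw [condProb_eq_g hR g P hg0 hg1 hfac i x z, condProb_eq_g hR g P hg0 hg1 hfac i x' z]
    refine congrArg (g i z) ?_
    funext k hk
    have hEk : E k i := (edge_iff h2 E hE k i).mp hk
    have hcol' := eq_of_heq (Sigma.ext_iff.mp hcol).2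
    simp only [indStaging] at hcol'
    exact congrFun (congrFun hcol' k) hEk
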